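/- arXiv:2109.14522 — 2 statements merged into one kernel-verified Lean document; each statement's English description precedes it below -/
import Mathlib

section
/- Let x ∈ ℂ^{n×r} have full rank r. Then the kernel of the real-linear map w ↦ x w* + w x* from ℂ^{n×r} to Hermitian n×n matrices is exactly the set {x K : K ∈ ℂ^{r×r}, K* = −K} of products of x with skew-Hermitian r×r matrices (the vertical space of the submersion π(x) = x x* at x). -/
open Matrix Filter
open scoped ComplexOrder

noncomputable def frob {p q : ℕ} (x : Matrix (Fin p) (Fin q) ℂ) : ℝ :=
  Real.sqrt (Matrix.trace (xᴴ * x)).re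

noncomputable def rinner {p q : ℕ} (X Y : Matrix (Fin p) (Fin q) ℂ) : ℝ :=
  (Matrix.trace (Xᴴ * Y)).re

noncomputable def nuclear {p q : ℕ} (x : Matrix (Fin p) (Fin q) ℂ) : ℝ :=
  (Matrix.trace ((Matrix.posSemidef_conjTranspose_mul_self x).1.eigenvectorUnitary.1 *
    diagonal (((↑) : ℝ → ℂ) ∘ Real.sqrt ∘ (Matrix.posSemidef_conjTranspose_mul_self x).1.eigenvalues) *
    (star (Matrix.posSemidef_conjTranspose_mul_self x).1.eigenvectorUnitary : Matrix (Fin q) (Fin q) ℂ))).re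

noncomputable def theta {n r : ℕ} (x : Matrix (Fin n) (Fin r) ℂ) : Matrix (Fin n) (Fin n) ℂ :=
  (Matrix.posSemidef_self_mul_conjTranspose x).1.eigenvectorUnitary.1 *
    diagonal (((↑) : ℝ → ℂ) ∘ Real.sqrt ∘ (Matrix.posSemidef_self_mul_conjTranspose x).1.eigenvalues) *
    (star (Matrix.posSemidef_self_mul_conjTranspose x).1.eigenvectorUnitary : Matrix (Fin n) (Fin n) ℂ)

noncomputable def psi {n r : ℕ} (x : Matrix (Fin n) (Fin r) ℂ) : Matrix (Fin n) (Fin n) ℂ :=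
  frob x • theta x

noncomputable def Dmet {n r : ℕ} (x y : Matrix (Fin n) (Fin r) ℂ) : ℝ :=
  ⨅ U : Matrix.unitaryGroup (Fin r) ℂ, frob (x - y * (U : Matrix (Fin r) (Fin r) ℂ))

noncomputable def dmet {n r : ℕ} (x y : Matrix (Fin n) (Fin r) ℂ) : ℝ :=
  ⨅ U : Matrix.unitaryGroup (Fin r) ℂ,
    frob (x - y * (U : Matrix (Fin r) (Fin r) ℂ)) * frob (x + y * (U : Matrix (Fin r) (Fin r) ℂ))


/-- for full-rank `x ∈ ℂ^{n×r}`, the kernel of `w ↦ x w* + w x*` is exactly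
the vertical space `{x K : Kskew-Hermitian}`. -/
theorem vertical_space_char (n r : ℕ) (x : Matrix (Fin n) (Fin r) ℂ) (hx : x.rank = r) :
    ∀ w : Matrix (Fin n) (Fin r) ℂ,
      x * wᴴ + w * xᴴ = 0 ↔
      ∃ K : Matrix (Fin r) (Fin r) ℂ, Kᴴ = -K ∧ w = x * K := by
  intro w
  constructor
  · intro hw
    set G := xᴴ * x with hGdef
    have hGH : Gᴴ = G := by
      simp [hGdef, Matrix.conjTranspose_mul]
    have hker : LinearMap.ker x.mulVecLin = ⊥ := by
      have hrn := x.mulVecLin.finrank_range_add_finrank_ker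
      have hdom : Module.finrank ℂ (Fin r → ℂ) = r := by simp
      have hrange : Module.finrank ℂ (LinearMap.range x.mulVecLin) = r := hx
      have : Module.finrank ℂ (LinearMap.ker x.mulVecLin) = 0 := by omega
      exact Submodule.finrank_eq_zero.mp this
    have hGker : LinearMap.ker G.mulVecLin = ⊥ := by
      rw [hGdef, Matrix.ker_mulVecLin_conjTranspose_mul_self, hker]
    have hGunit : IsUnit G := by
      rw [← Matrix.mulVec_injective_iff_isUnit]
      intro a b hab
      have : G.mulVecLin a = G.mulVecLin b := hab
      exact LinearMap.ker_eq_bot.mp hGker (by simpa using this)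
    have hGdet : IsUnit G.det := (Matrix.isUnit_iff_isUnit_det G).mp hGunit
    -- multiply hw on the right by x
    have h1 : x * (wᴴ * x) + w * G = 0 := by
      have := congrArg (fun M => M * x) hw
      simpa [Matrix.add_mul, Matrix.mul_assoc, hGdef] using this
    -- multiply hw on both sides
    have h2 : G * (wᴴ * x) + (xᴴ * w) * G = 0 := by
      have := congrArg (fun M => xᴴ * M * x) hw
      simpa [Matrix.add_mul, Matrix.mul_add, Matrix.mul_assoc, hGdef] using this
    refine ⟨-((wᴴ * x) * G⁻¹), ?_, ?_⟩
    · have hG2 : G * (wᴴ * x) = -((xᴴ * w) * G) := by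
        have := eq_neg_of_add_eq_zero_left h2
        linear_combination (norm := noncomm_ring) this
      have key : (wᴴ * x) * G⁻¹ = -(G⁻¹ * (xᴴ * w)) := by
        have : (wᴴ * x) = G⁻¹ * (G * (wᴴ * x)) := by
          rw [← Matrix.mul_assoc, Matrix.nonsing_inv_mul G hGdet, Matrix.one_mul]
        rw [this, hG2]
        rw [Matrix.mul_neg, Matrix.neg_mul, Matrix.mul_assoc, Matrix.mul_assoc,
          Matrix.mul_nonsing_inv G hGdet, Matrix.mul_one]
      rw [Matrix.conjTranspose_neg, Matrix.conjTranspose_mul, Matrix.conjTranspose_mul,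
        Matrix.conjTranspose_nonsing_inv, hGH, Matrix.conjTranspose_conjTranspose, key]
      simp [Matrix.mul_assoc]
    · have hwG : x * (wᴴ * x) = -(w * G) := eq_neg_of_add_eq_zero_left h1
      have hxK : x * -(wᴴ * x * G⁻¹) = w := by
        rw [Matrix.mul_neg, ← Matrix.mul_assoc, hwG, Matrix.neg_mul, Matrix.mul_assoc,
          Matrix.mul_nonsing_inv G hGdet, Matrix.mul_one, neg_neg]
      exact hxK.symm
  · rintro ⟨K, hK, rfl⟩
    rw [Matrix.conjTranspose_mul, hK]
    simp [Matrix.neg_mul, Matrix.mul_neg, Matrix.mul_assoc]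
end

section
/- Let x ∈ ℂ^{n×r} have full rank r, let P denote the orthogonal projection onto Ran(x) and P⊥ = I − P. Then the orthogonal complement in (ℂ^{n×r}, ⟨·,·⟩_ℝ) of the vertical space {x K : K skew-Hermitian} equals the horizontal space H_x = {H x + X : H ∈ ℂ^{n×n} Hermitian with P H = H, X ∈ ℂ^{n×r} with P X = 0}, and the image of H_x under the differential w ↦ x w* + w x* equals the tangent space {W ∈ ℂ^{n×n} : W* = W and P⊥ W P⊥ = 0}. -/
open Matrix Filter
open scoped ComplexOrder

/-- Re tr(Kᴴ B) = 0 when K skew-Hermitian and B Hermitian -/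
lemma aux_skew_herm {r : ℕ} (K B : Matrix (Fin r) (Fin r) ℂ)
    (hK : Kᴴ = -K) (hB : Bᴴ = B) : (Matrix.trace (Kᴴ * B)).re = 0 := by
  have e1 : Matrix.trace ((Kᴴ * B)ᴴ) = star (Matrix.trace (Kᴴ * B)) :=
    Matrix.trace_conjTranspose _
  rw [conjTranspose_mul, conjTranspose_conjTranspose, hB] at e1
  have e2 : Matrix.trace (Kᴴ * B) = - Matrix.trace (B * K) := by
    rw [hK, Matrix.neg_mul, Matrix.trace_neg, Matrix.trace_mul_comm]
  have e3 : star (Matrix.trace (Kᴴ * B)) = - Matrix.trace (Kᴴ * B) := by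
    rw [← e1, e2, neg_neg]
  have h4 := congrArg Complex.re e3
  rw [Complex.neg_re, Complex.star_def, Complex.conj_re] at h4
  linarith

/-- K = 0 when Re tr(Kᴴ K) = 0 -/
lemma aux_trace_zero {p q : ℕ} (K : Matrix (Fin p) (Fin q) ℂ)
    (h : (Matrix.trace (Kᴴ * K)).re = 0) : K = 0 := by
  have hre : (Matrix.trace (Kᴴ * K)).re = ∑ j, ∑ i, Complex.normSq (K i j) := by
    simp only [Matrix.trace, Matrix.diag, Matrix.mul_apply, Matrix.conjTranspose_apply]
    rw [Complex.re_sum]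
    refine Finset.sum_congr rfl fun j _ => ?_
    rw [Complex.re_sum]
    refine Finset.sum_congr rfl fun i _ => ?_
    rw [Complex.star_def, ← Complex.normSq_eq_conj_mul_self]
    simp
  rw [hre] at h
  ext i j
  have h1 := (Finset.sum_eq_zero_iff_of_nonneg (fun j _ => Finset.sum_nonneg
    (fun i _ => Complex.normSq_nonneg (K i j)))).mp h j (Finset.mem_univ j)
  have h2 := (Finset.sum_eq_zero_iff_of_nonneg (fun i _ =>
    Complex.normSq_nonneg (K i j))).mp h1 i (Finset.mem_univ i)
  simpa using Complex.normSq_eq_zero.mp h2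


lemma aux_expand {n : ℕ} {r : ℕ} (x X : Matrix (Fin n) (Fin r) ℂ)
    (H : Matrix (Fin n) (Fin n) ℂ) (hH : Hᴴ = H) :
    x * (H * x + X)ᴴ + (H * x + X) * xᴴ
      = ((x * xᴴ) * H + H * (x * xᴴ)) + (x * Xᴴ + X * xᴴ) := by
  rw [conjTranspose_add, conjTranspose_mul, hH]
  simp only [Matrix.mul_add, Matrix.add_mul, Matrix.mul_assoc]
  abel

lemma aux_sylvester {r : ℕ} (s C : Matrix (Fin r) (Fin r) ℂ) (hsHerm : s.IsHermitian)
    (hC : Cᴴ = C) (hlam_pos : ∀ i, 0 < hsHerm.eigenvalues i) :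
    ∃ D : Matrix (Fin r) (Fin r) ℂ, Dᴴ = D ∧ s * D + D * s = C := by
  classical
  set U : Matrix (Fin r) (Fin r) ℂ := (hsHerm.eigenvectorUnitary : Matrix (Fin r) (Fin r) ℂ)
    with hU_def
  set lam : Fin r → ℝ := hsHerm.eigenvalues with hlam_def
  have hU1 : Uᴴ * U = 1 := by
    have := Matrix.mem_unitaryGroup_iff'.mp (hsHerm.eigenvectorUnitary).2
    rwa [Matrix.star_eq_conjTranspose] at this
  have hU2 : U * Uᴴ = 1 := by
    have := Matrix.mem_unitaryGroup_iff.mp (hsHerm.eigenvectorUnitary).2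
    rwa [Matrix.star_eq_conjTranspose] at this
  set lamC : Fin r → ℂ := fun i => ((lam i : ℝ) : ℂ) with hlamC_def
  have hspec : s = U * Matrix.diagonal lamC * Uᴴ := by
    have := hsHerm.spectral_theorem
    rwa [Unitary.conjStarAlgAut_apply, Matrix.star_eq_conjTranspose] at this
  have hden : ∀ i j, lamC i + lamC j ≠ 0 := by
    intro i j
    rw [hlamC_def]
    have hpos : (0:ℝ) < lam i + lam j := add_pos (hlam_pos i) (hlam_pos j)
    rw [show ((lam i : ℝ) : ℂ) + ((lam j : ℝ) : ℂ) = ((lam i + lam j : ℝ) : ℂ) by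
      push_cast; ring]
    exact_mod_cast hpos.ne'
  set N : Matrix (Fin r) (Fin r) ℂ := Uᴴ * C * U with hN_def
  have hNH : Nᴴ = N := by
    rw [hN_def]
    simp only [conjTranspose_mul, conjTranspose_conjTranspose, hC, Matrix.mul_assoc]
  set E : Matrix (Fin r) (Fin r) ℂ :=
    Matrix.of (fun i j => N i j / (lamC i + lamC j)) with hE_def
  have hEentry : ∀ i j, E i j = N i j / (lamC i + lamC j) := fun i j => rfl
  have hEH : Eᴴ = E := by
    ext i j
    rw [Matrix.conjTranspose_apply, hEentry, hEentry, star_div₀]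
    have hn : star (N j i) = N i j := by
      have := congrFun (congrFun hNH i) j
      rwa [Matrix.conjTranspose_apply] at this
    have hd : star (lamC j + lamC i) = lamC i + lamC j := by
      rw [hlamC_def]
      simp [add_comm]
    rw [hn, hd]
  refine ⟨U * E * Uᴴ, ?_, ?_⟩
  · simp only [conjTranspose_mul, conjTranspose_conjTranspose, hEH, Matrix.mul_assoc]
  · have hsD : s * (U * E * Uᴴ) = U * (Matrix.diagonal lamC * E) * Uᴴ := by
      rw [hspec]
      rw [show U * Matrix.diagonal lamC * Uᴴ * (U * E * Uᴴ)
          = U * Matrix.diagonal lamC * (Uᴴ * U) * E * Uᴴ by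
        simp only [Matrix.mul_assoc], hU1]
      simp only [Matrix.mul_one, Matrix.mul_assoc]
    have hDs : (U * E * Uᴴ) * s = U * (E * Matrix.diagonal lamC) * Uᴴ := by
      rw [hspec]
      rw [show U * E * Uᴴ * (U * Matrix.diagonal lamC * Uᴴ)
          = U * E * (Uᴴ * U) * Matrix.diagonal lamC * Uᴴ by
        simp only [Matrix.mul_assoc], hU1]
      simp only [Matrix.mul_one, Matrix.mul_assoc]
    have hmid : Matrix.diagonal lamC * E + E * Matrix.diagonal lamC = N := by
      ext i j
      rw [Matrix.add_apply, Matrix.diagonal_mul, Matrix.mul_diagonal, hEentry]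
      have hd := hden i j
      field_simp
    rw [hsD, hDs, ← Matrix.add_mul, ← Matrix.mul_add, hmid, hN_def]
    rw [show U * (Uᴴ * C * U) * Uᴴ = (U * Uᴴ) * C * (U * Uᴴ) by
      simp only [Matrix.mul_assoc], hU2, Matrix.one_mul, Matrix.mul_one]

/-- for full-rank `x ∈ ℂ^{n×r}` and `P` the orthogonal projection onto
`Ran(x)`, the orthogonal complement (w.r.t. `⟨z,w⟩_ℝ = Re tr(z* w)`) of the vertical space
`{x K : K* = −K}` is the horizontal space
`H_x = {H x + X : H Hermitian, P H = H, P X = 0}`, and the image of `H_x` under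
`w ↦ x w* + w x*` is the tangent space `{W : W* = W, (1−P) W (1−P) = 0}`. -/
theorem horizontal_space_and_tangent_space (n r : ℕ)
    (x : Matrix (Fin n) (Fin r) ℂ) (hx : x.rank = r)
    (P : Matrix (Fin n) (Fin n) ℂ) (hP1 : Pᴴ = P) (hP2 : P * P = P)
    (hPran : ∀ u : Fin n → ℂ, P *ᵥ u = u ↔ ∃ c : Fin r → ℂ, u = x *ᵥ c) :
    (∀ w : Matrix (Fin n) (Fin r) ℂ,
      (∀ K : Matrix (Fin r) (Fin r) ℂ, Kᴴ = -K →
        (Matrix.trace ((x * K)ᴴ * w)).re = 0) ↔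
      ∃ (H : Matrix (Fin n) (Fin n) ℂ) (X : Matrix (Fin n) (Fin r) ℂ),
        Hᴴ = H ∧ P * H = H ∧ P * X = 0 ∧ w = H * x + X) ∧
    (∀ W : Matrix (Fin n) (Fin n) ℂ,
      (∃ (H : Matrix (Fin n) (Fin n) ℂ) (X : Matrix (Fin n) (Fin r) ℂ),
        Hᴴ = H ∧ P * H = H ∧ P * X = 0 ∧
        W = x * (H * x + X)ᴴ + (H * x + X) * xᴴ) ↔
      (Wᴴ = W ∧ (1 - P) * W * (1 - P) = 0)) := by
  classical
  set s : Matrix (Fin r) (Fin r) ℂ := xᴴ * x with hs_def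
  have hsH : sᴴ = s := by
    rw [hs_def, conjTranspose_mul, conjTranspose_conjTranspose]
  have hrank : s.rank = r := by
    rw [hs_def, Matrix.rank_conjTranspose_mul_self, hx]
  have hsu : IsUnit s := by
    rw [← Matrix.mulVec_injective_iff_isUnit]
    have hsurj : Function.Surjective s.mulVecLin := by
      rw [← LinearMap.range_eq_top]
      apply Submodule.eq_top_of_finrank_eq
      rw [← Matrix.rank, hrank]
      simp
    exact (LinearMap.injective_iff_surjective).mpr hsurj
  have hdet : IsUnit s.det := (Matrix.isUnit_iff_isUnit_det s).mp hsu
  set g : Matrix (Fin r) (Fin r) ℂ := s⁻¹ with hg_def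
  have hgs : g * s = 1 := Matrix.nonsing_inv_mul s hdet
  have hsg : s * g = 1 := Matrix.mul_nonsing_inv s hdet
  have hgH : gᴴ = g := by rw [hg_def, Matrix.conjTranspose_nonsing_inv, hsH]
  have hPx : P * x = x := by
    ext i j
    have h1 : P *ᵥ (x *ᵥ Pi.single j 1) = x *ᵥ Pi.single j 1 := (hPran _).mpr ⟨_, rfl⟩
    rw [Matrix.mulVec_mulVec] at h1
    have := congrFun h1 i
    simpa using this
  have hxP : xᴴ * P = xᴴ := by rw [← hP1, ← conjTranspose_mul, hPx]
  have key : P = x * g * xᴴ := by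
    have hcol : ∀ j : Fin n, ∃ c : Fin r → ℂ, P *ᵥ Pi.single j 1 = x *ᵥ c := by
      intro j
      exact (hPran (P *ᵥ Pi.single j 1)).mp (by rw [Matrix.mulVec_mulVec, hP2])
    choose c hc using hcol
    have hPC : P = x * (Matrix.of fun k j => c j k) := by
      ext i j
      have := congrFun (hc j) i
      simp only [Matrix.mulVec_single_one] at this
      change P i j = _ at this
      rw [this]
      simp [Matrix.mulVec, Matrix.mul_apply, dotProduct]
    have hQP : (x * g * xᴴ) * P = P := by
      conv_lhs => rw [hPC]
      rw [show x * g * xᴴ * (x * Matrix.of fun k j => c j k)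
          = x * (g * (xᴴ * x)) * Matrix.of (fun k j => c j k) by
        simp only [Matrix.mul_assoc]]
      rw [← hs_def, hgs, Matrix.mul_one, ← hPC]
    have hQH : (x * g * xᴴ)ᴴ = x * g * xᴴ := by
      simp only [conjTranspose_mul, conjTranspose_conjTranspose, hgH, Matrix.mul_assoc]
    have hPQ : P * (x * g * xᴴ) = x * g * xᴴ := by
      rw [show P * (x * g * xᴴ) = (P * x) * g * xᴴ by simp only [Matrix.mul_assoc], hPx]
    have h3 : P * (x * g * xᴴ) = P := by
      have := congrArg conjTranspose hQP
      rw [conjTranspose_mul, hQH, hP1] at this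
      exact this
    rw [← h3, hPQ]
  constructor
  · -- Part 1
    intro w
    constructor
    · intro hw
      set A : Matrix (Fin r) (Fin r) ℂ := xᴴ * w with hA_def
      have hA : Aᴴ = A := by
        set K : Matrix (Fin r) (Fin r) ℂ := A - Aᴴ with hK_def
        have hK : Kᴴ = -K := by
          rw [hK_def, conjTranspose_sub, conjTranspose_conjTranspose, neg_sub]
        have h0 : (Matrix.trace (Kᴴ * A)).re = 0 := by
          have := hw K hK
          rwa [conjTranspose_mul, Matrix.mul_assoc, ← hA_def] at this
        have e1 : Kᴴ * K = Kᴴ * A - Kᴴ * Aᴴ := by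
          rw [hK_def, Matrix.mul_sub]
        have e2 : (Matrix.trace (Kᴴ * Aᴴ)).re = - (Matrix.trace (Kᴴ * A)).re := by
          have t1 : Matrix.trace (Kᴴ * Aᴴ) = star (Matrix.trace (A * K)) := by
            conv_rhs => rw [← Matrix.trace_conjTranspose, conjTranspose_mul]
          have t2 : Matrix.trace (A * K) = - Matrix.trace (Kᴴ * A) := by
            rw [Matrix.trace_mul_comm, hK, Matrix.neg_mul, Matrix.trace_neg, neg_neg]
          rw [t1, t2]
          simp
        have e3 : (Matrix.trace (Kᴴ * K)).re = 0 := by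
          rw [e1, Matrix.trace_sub, Complex.sub_re, e2, h0]
          ring
        have hK0 : K = 0 := aux_trace_zero K e3
        have h5 : A - Aᴴ = 0 := by rw [← hK_def]; exact hK0
        exact (sub_eq_zero.mp h5).symm
      refine ⟨x * g * A * g * xᴴ, w - P * w, ?_, ?_, ?_, ?_⟩
      · simp only [conjTranspose_mul, conjTranspose_conjTranspose, hgH, hA, Matrix.mul_assoc]
      · rw [show P * (x * g * A * g * xᴴ) = (P * x) * g * A * g * xᴴ by
          simp only [Matrix.mul_assoc], hPx]
      · rw [Matrix.mul_sub, ← Matrix.mul_assoc, hP2, sub_self]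
      · have h5 : x * g * A * g * xᴴ * x = x * g * A := by
          rw [show x * g * A * g * xᴴ * x = x * g * A * (g * (xᴴ * x)) by
            simp only [Matrix.mul_assoc], ← hs_def, hgs, Matrix.mul_one]
        have h6 : P * w = x * g * A := by
          rw [key]
          simp only [Matrix.mul_assoc]
          rw [hA_def]
        rw [h5, h6]
        abel
    · rintro ⟨H, X, hH, hPH, hPX, rfl⟩ K hK
      have hxX : xᴴ * X = 0 := by rw [← hxP, Matrix.mul_assoc, hPX, Matrix.mul_zero]
      have hform : (x * K)ᴴ * (H * x + X) = Kᴴ * (xᴴ * (H * x)) := by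
        rw [conjTranspose_mul, Matrix.mul_assoc, Matrix.mul_add, Matrix.mul_add,
          hxX, Matrix.mul_zero, add_zero]
      rw [hform]
      apply aux_skew_herm _ _ hK
      rw [conjTranspose_mul, conjTranspose_mul, conjTranspose_conjTranspose, hH,
        Matrix.mul_assoc]
  · -- Part 2
    intro W
    constructor
    · rintro ⟨H, X, hH, hPH, hPX, rfl⟩
      have h1 : (1 - P) * x = 0 := by rw [Matrix.sub_mul, Matrix.one_mul, hPx, sub_self]
      have h2 : xᴴ * (1 - P) = 0 := by rw [Matrix.mul_sub, Matrix.mul_one, hxP, sub_self]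
      have h3 : (1 - P) * H = 0 := by rw [Matrix.sub_mul, Matrix.one_mul, hPH, sub_self]
      constructor
      · rw [conjTranspose_add, conjTranspose_mul, conjTranspose_mul,
          conjTranspose_conjTranspose, conjTranspose_conjTranspose, add_comm]
      · have hZ : (1 - P) * (H * x + X) = X := by
          rw [Matrix.mul_add, ← Matrix.mul_assoc, h3, Matrix.zero_mul, zero_add,
            Matrix.sub_mul, Matrix.one_mul, hPX, sub_zero]
        have hsplit : (1 - P) * (x * (H * x + X)ᴴ + (H * x + X) * xᴴ) * (1 - P)
            = ((1 - P) * x) * ((H * x + X)ᴴ * (1 - P))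
              + ((1 - P) * (H * x + X)) * (xᴴ * (1 - P)) := by
          simp only [Matrix.mul_add, Matrix.add_mul, Matrix.mul_assoc]
        rw [hsplit, h1, hZ, h2, Matrix.zero_mul, Matrix.mul_zero, add_zero]
    · rintro ⟨hWH, hW0⟩
      have hsPSD : s.PosSemidef := by
        rw [hs_def]; exact Matrix.posSemidef_conjTranspose_mul_self x
      have hsHerm : s.IsHermitian := hsPSD.1
      have hdet2 : s.det ≠ 0 := hdet.ne_zero
      have hlam_pos : ∀ i, 0 < hsHerm.eigenvalues i := by
        intro i
        have hnn : (0:ℝ) ≤ hsHerm.eigenvalues i := hsPSD.eigenvalues_nonneg i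
        rcases hnn.lt_or_eq with h | h
        · exact h
        · exfalso
          apply hdet2
          rw [hsHerm.det_eq_prod_eigenvalues]
          apply Finset.prod_eq_zero (Finset.mem_univ i)
          rw [← h]
          simp
      have hC : (g * xᴴ * W * x * g)ᴴ = g * xᴴ * W * x * g := by
        simp only [conjTranspose_mul, conjTranspose_conjTranspose, hgH, hWH, Matrix.mul_assoc]
      obtain ⟨D, hDH, hSyl⟩ := aux_sylvester s (g * xᴴ * W * x * g) hsHerm hC hlam_pos
      have hHH : (x * D * xᴴ)ᴴ = x * D * xᴴ := by
        simp only [conjTranspose_mul, conjTranspose_conjTranspose, hDH, Matrix.mul_assoc]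
      refine ⟨x * D * xᴴ, (1 - P) * W * x * g, hHH, ?_, ?_, ?_⟩
      · rw [show P * (x * D * xᴴ) = (P * x) * D * xᴴ by simp only [Matrix.mul_assoc], hPx]
      · rw [show P * ((1 - P) * W * x * g) = (P * (1 - P)) * (W * x * g) by
          simp only [Matrix.mul_assoc],
          show P * (1 - P) = 0 by rw [Matrix.mul_sub, Matrix.mul_one, hP2, sub_self],
          Matrix.zero_mul]
      · have hPm : (1 - P)ᴴ = 1 - P := by rw [conjTranspose_sub, conjTranspose_one, hP1]
        rw [aux_expand x ((1 - P) * W * x * g) (x * D * xᴴ) hHH]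
        have ea : (x * xᴴ) * (x * D * xᴴ) + (x * D * xᴴ) * (x * xᴴ) = P * W * P := by
          have lhs_eq : (x * xᴴ) * (x * D * xᴴ) + (x * D * xᴴ) * (x * xᴴ)
              = x * (s * D + D * s) * xᴴ := by
            rw [hs_def]
            simp only [Matrix.mul_add, Matrix.add_mul, Matrix.mul_assoc]
          rw [lhs_eq, hSyl, key]
          simp only [Matrix.mul_assoc]
        have eb : x * ((1 - P) * W * x * g)ᴴ = P * W * (1 - P) := by
          rw [conjTranspose_mul, conjTranspose_mul, conjTranspose_mul, hgH, hWH, hPm]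
          nth_rewrite 2 [key]
          simp only [Matrix.mul_assoc]
        have ec : ((1 - P) * W * x * g) * xᴴ = (1 - P) * W * P := by
          nth_rewrite 3 [key]
          simp only [Matrix.mul_assoc]
        rw [ea, eb, ec]
        have decomp : W - ((1 - P) * W * (1 - P))
            = P * W * P + (P * W * (1 - P) + (1 - P) * W * P) := by
          noncomm_ring
        rw [hW0, sub_zero] at decomp
        exact decomp
end
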